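/- Let (X, d) be a metric space with a distinguished point ρ and μ a finite Borel measure on X × E for a metric space E. Define the height h(X, d, ρ, μ) = sup{ d(ρ, x) : (x, e) ∈ supp μ }. If a sequence of marked metric measure spaces X_n converges to X in the marked Gromov-weak topology (i.e., all polynomial test functionals converge) and h(X_n) ≤ t for all n, then h(X) ≤ t. Equivalently, the height functional is lower semi-continuous with respect to Gromov-weak convergence. -/

import Mathlib

open MeasureTheory

noncomputable section

/-- The `(k+1) × (k+1)` matrix of pairwise distances between the root `ρ` (index `0`)
and `k` sampled points. -/
def distMat {X : Type*} [PseudoMetricSpace X] (ρ : X) {k : ℕ} (u : Fin k → X)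
    (i j : Fin (k + 1)) : ℝ :=
  dist (Fin.cases (motive := fun _ => X) ρ u i) (Fin.cases (motive := fun _ => X) ρ u j)

/-- **Lower semicontinuity of the height for marked Gromov-weak convergence.**
Let `(Xₙ, dₙ, ρₙ, μₙ)` be pointed marked metric measure spaces (finite measures on
`Xₙ × E`) converging to `(Y, d, ρ', ν)` in the marked Gromov-weak sense: all polynomial
functionals, i.e. integrals against bounded continuous functions of the matrix of pairwise
distances among `k` sampled points and the root together with the marks, converge.
If the height of each `Xₙ` is at most `t` (the measure of the set of points at distance
`> t` from the root vanishes), then the height of the limit is at most `t`. -/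
theorem height_lowerSemicontinuous_gromovWeak
    {E : Type*} [MetricSpace E] [MeasurableSpace E] [BorelSpace E]
    (X : ℕ → Type*) [∀ n, MetricSpace (X n)] [∀ n, MeasurableSpace (X n)]
    [∀ n, BorelSpace (X n)]
    (ρ : ∀ n, X n) (μ : ∀ n, Measure (X n × E)) [∀ n, IsFiniteMeasure (μ n)]
    (Y : Type*) [MetricSpace Y] [MeasurableSpace Y] [BorelSpace Y]
    (ρ' : Y) (ν : Measure (Y × E)) [IsFiniteMeasure ν]
    (hconv : ∀ (k : ℕ) (φ : ((Fin (k + 1) → Fin (k + 1) → ℝ) × (Fin k → E)) → ℝ),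
      Continuous φ → (∃ M, ∀ p, |φ p| ≤ M) →
      Filter.Tendsto
        (fun n => ∫ u : Fin k → X n × E,
          φ (distMat (ρ n) fun l => (u l).1, fun l => (u l).2)
            ∂(Measure.pi fun _ : Fin k => μ n))
        Filter.atTop
        (nhds (∫ u : Fin k → Y × E,
          φ (distMat ρ' fun l => (u l).1, fun l => (u l).2)
            ∂(Measure.pi fun _ : Fin k => ν))))
    (t : ℝ)
    (hn : ∀ n, μ n {p : X n × E | t < dist (ρ n) p.1} = 0) :
    ν {p : Y × E | t < dist ρ' p.1} = 0 := by
  have key : ∀ ε : ℝ, 0 < ε → ν {p : Y × E | t + ε ≤ dist ρ' p.1} = 0 := by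
    intro ε hε
    set f : ℝ → ℝ := fun s => min 1 (max 0 ((s - t) / ε)) with hfdef
    have hfc : Continuous f :=
      continuous_const.min (continuous_const.max (by fun_prop))
    have hf0 : ∀ s, s ≤ t → f s = 0 := by
      intro s hs
      have : (s - t) / ε ≤ 0 := div_nonpos_of_nonpos_of_nonneg (by linarith) hε.le
      simp [hfdef, max_eq_left this]
    have hf1 : ∀ s, t + ε ≤ s → f s = 1 := by
      intro s hs
      have h1 : (1 : ℝ) ≤ (s - t) / ε := (one_le_div hε).2 (by linarith)
      have : max 0 ((s - t) / ε) = (s - t) / ε := max_eq_right (by linarith)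
      simp [hfdef, this, min_eq_left h1]
    have hf01 : ∀ s, 0 ≤ f s ∧ f s ≤ 1 :=
      fun s => ⟨le_min zero_le_one (le_max_left _ _), min_le_left _ _⟩
    set φ : ((Fin 2 → Fin 2 → ℝ) × (Fin 1 → E)) → ℝ := fun p => f (p.1 0 1) with hφdef
    have hφc : Continuous φ := by
      apply hfc.comp
      exact (continuous_apply _).comp ((continuous_apply _).comp continuous_fst)
    have hφb : ∃ M, ∀ p, |φ p| ≤ M := by
      refine ⟨1, fun p => ?_⟩
      rw [abs_le]
      exact ⟨by linarith [(hf01 (p.1 0 1)).1], (hf01 (p.1 0 1)).2⟩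
    have h := hconv 1 φ hφc hφb
    -- the integrals on the left are all zero
    have hzero : ∀ n, (∫ u : Fin 1 → X n × E,
        φ (distMat (ρ n) fun l => (u l).1, fun l => (u l).2)
          ∂(Measure.pi fun _ : Fin 1 => μ n)) = 0 := by
      intro n
      apply MeasureTheory.integral_eq_zero_of_ae
      have hpi : (Measure.pi fun _ : Fin 1 => μ n)
          {u : Fin 1 → X n × E | t < dist (ρ n) (u 0).1} = 0 := by
        have heq : {u : Fin 1 → X n × E | t < dist (ρ n) (u 0).1}
            = Set.pi Set.univ (fun _ : Fin 1 => {p : X n × E | t < dist (ρ n) p.1}) := by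
          ext u
          simp only [Set.mem_setOf_eq, Set.mem_pi, Set.mem_univ, forall_true_left]
          constructor
          · intro hx i
            have : i = 0 := Subsingleton.elim _ _
            rw [this]; exact hx
          · intro hx; exact hx 0
        rw [heq, Measure.pi_pi]
        simp [hn n]
      filter_upwards [MeasureTheory.measure_eq_zero_iff_ae_notMem.mp hpi] with u hu
      have hle : dist (ρ n) (u 0).1 ≤ t := not_lt.mp hu
      have hrfl : distMat (ρ n) (fun l => (u l).1) 0 1 = dist (ρ n) (u 0).1 := rfl
      simp only [hφdef, hrfl]
      exact hf0 _ hle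
    set g : (Fin 1 → Y × E) → ℝ := fun u =>
      φ (distMat ρ' fun l => (u l).1, fun l => (u l).2) with hg
    have hlim : (∫ u, g u ∂(Measure.pi fun _ : Fin 1 => ν)) = 0 := by
      have h0 : Filter.Tendsto (fun n => ∫ u : Fin 1 → X n × E,
          φ (distMat (ρ n) fun l => (u l).1, fun l => (u l).2)
            ∂(Measure.pi fun _ : Fin 1 => μ n)) Filter.atTop (nhds 0) := by
        simp only [hzero]
        exact tendsto_const_nhds
      exact tendsto_nhds_unique h h0
    set C : Set (Y × E) := {p : Y × E | t + ε ≤ dist ρ' p.1} with hC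
    -- measurability and integrability of g
    have hgm : Measurable g := by
      have hge : g = fun u => f (dist ρ' (u 0).1) := rfl
      rw [hge]
      exact hfc.measurable.comp ((continuous_const.dist continuous_id).measurable.comp
        (measurable_fst.comp (measurable_pi_apply 0)))
    have hgint : MeasureTheory.Integrable g (Measure.pi fun _ : Fin 1 => ν) := by
      refine MeasureTheory.Integrable.mono' (MeasureTheory.integrable_const 1)
        hgm.aestronglyMeasurable (Filter.Eventually.of_forall fun u => ?_)
      rw [Real.norm_eq_abs, abs_le]
      exact ⟨by linarith [(hf01 (distMat ρ' (fun l => (u l).1) 0 1)).1],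
        (hf01 (distMat ρ' (fun l => (u l).1) 0 1)).2⟩
    -- Markov's inequality
    have hmar := MeasureTheory.mul_meas_ge_le_integral_of_nonneg
      (μ := Measure.pi fun _ : Fin 1 => ν)
      (Filter.Eventually.of_forall fun u => (hf01 (distMat ρ' (fun l => (u l).1) 0 1)).1)
      hgint 1
    rw [hlim, one_mul] at hmar
    have hne : (Measure.pi fun _ : Fin 1 => ν) {u : Fin 1 → Y × E | 1 ≤ g u} ≠ ⊤ := by
      refine ne_top_of_le_ne_top ?_ (measure_mono (Set.subset_univ _))
      rw [Measure.pi_univ]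
      exact ENNReal.prod_ne_top fun i _ => measure_ne_top ν _
    have hzero' : (Measure.pi fun _ : Fin 1 => ν) {u : Fin 1 → Y × E | 1 ≤ g u} = 0 := by
      have h0 := le_antisymm hmar ENNReal.toReal_nonneg
      rwa [measureReal_def, ENNReal.toReal_eq_zero_iff, or_iff_left hne] at h0
    -- the cylinder over C is contained in {1 ≤ g}
    have hsub : Set.pi Set.univ (fun _ : Fin 1 => C)
        ⊆ {u : Fin 1 → Y × E | 1 ≤ g u} := by
      intro u hu
      have hu0 : u 0 ∈ C := hu 0 (Set.mem_univ 0)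
      have hge : g u = f (dist ρ' (u 0).1) := rfl
      simp only [Set.mem_setOf_eq, hge, hf1 _ hu0, le_refl]
    have : (Measure.pi fun _ : Fin 1 => ν) (Set.pi Set.univ (fun _ : Fin 1 => C)) = 0 :=
      measure_mono_null hsub hzero'
    rw [Measure.pi_pi] at this
    simpa using this
  -- conclude via a countable union
  have hsub : {p : Y × E | t < dist ρ' p.1}
      ⊆ ⋃ n : ℕ, {p : Y × E | t + 1 / (n + 1) ≤ dist ρ' p.1} := by
    intro p hp
    obtain ⟨n, hn'⟩ := exists_nat_one_div_lt
      (show (0 : ℝ) < dist ρ' p.1 - t from sub_pos.mpr hp)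
    exact Set.mem_iUnion.mpr ⟨n, by simp only [Set.mem_setOf_eq]; linarith⟩
  refine measure_mono_null hsub (MeasureTheory.measure_iUnion_null fun n => ?_)
  exact key (1 / (n + 1)) (by positivity)

end
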